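/- The 0/1-weight feed-forward network with threshold τ ∈ [r₁k, r₂k] (r₁,r₂)-recognizes the concept hierarchy: if B is presented at time t, then every concept c ∈ supp_{r₂}(B) has rep(c) fire at time t + level(c), and every concept c ∉ supp_{r₁}(B) has rep(c) not fire at time t + level(c). -/
import Mathlib


open scoped Classical
noncomputable section

/-- A concept hierarchy: concepts at levels `0..L`, each concept at level `≥ 1`
has exactly `k` children one level below, level-0 concepts have no children,
there are exactly `k` top-level concepts, and every non-top concept has a parent. -/
structure ConceptHierarchy (α : Type) [DecidableEq α] where
  L : ℕ
  k : ℕ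
  concepts : Finset α
  level : α → ℕ
  children : α → Finset α
  level_le : ∀ c ∈ concepts, level c ≤ L
  children_mem : ∀ c ∈ concepts, ∀ c' ∈ children c, c' ∈ concepts
  children_level : ∀ c ∈ concepts, ∀ c' ∈ children c, level c' + 1 = level c
  children_card : ∀ c ∈ concepts, 1 ≤ level c → (children c).card = k
  children_leaf : ∀ c ∈ concepts, level c = 0 → children c = ∅
  top_card : (concepts.filter (fun c => level c = L)).card = k
  has_parent : ∀ c ∈ concepts, level c < L → ∃ c' ∈ concepts, c ∈ children c'

namespace ConceptHierarchy

variable {α : Type} [DecidableEq α]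

/-- The parents of a concept. -/
def parents (H : ConceptHierarchy α) (c : α) : Finset α :=
  H.concepts.filter (fun c' => c ∈ H.children c')

/-- Limited overlap: each concept at level `≥ 1` shares at most `o·k` children
with the union of the other concepts at the same level. -/
def LimitedOverlap (H : ConceptHierarchy α) (o : ℝ) : Prop :=
  ∀ c ∈ H.concepts, 1 ≤ H.level c →
    (((H.children c).filter (fun d => ∃ c' ∈ H.concepts, c' ≠ c ∧
        H.level c' = H.level c ∧ d ∈ H.children c')).card : ℝ) ≤ o * H.k

/-- Tree hierarchy: no overlap among child sets of distinct same-level concepts. -/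
def IsTree (H : ConceptHierarchy α) : Prop :=
  ∀ c ∈ H.concepts, ∀ c' ∈ H.concepts, H.level c = H.level c' → c ≠ c' →
    Disjoint (H.children c) (H.children c')

/-- Descendant relation: reflexive-transitive closure of the children relation. -/
inductive Desc (H : ConceptHierarchy α) : α → α → Prop
  | refl (c : α) : Desc H c c
  | step {c d e : α} : d ∈ H.children c → Desc H d e → Desc H c e

/-- The level-0 descendants of a concept. -/
def leaves (H : ConceptHierarchy α) (c : α) : Finset α :=
  H.concepts.filter (fun d => H.Desc c d ∧ H.level d = 0)

/-- Level-indexed bottom-up support sets: `S(0) = B ∩ C₀`,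
`S(ℓ) = {c at level ℓ : |children(c) ∩ S(ℓ-1)| ≥ r·k}`. -/
def suppL (H : ConceptHierarchy α) (r : ℝ) (B : Finset α) : ℕ → Finset α
  | 0 => B ∩ H.concepts.filter (fun c => H.level c = 0)
  | (ℓ+1) => H.concepts.filter (fun c => H.level c = ℓ + 1 ∧
      r * H.k ≤ ((H.children c ∩ suppL H r B ℓ).card : ℝ))

/-- `supp_r(B) = ⋃_ℓ S(ℓ)`. -/
def supp (H : ConceptHierarchy α) (r : ℝ) (B : Finset α) : Set α :=
  ⋃ ℓ, ↑(H.suppL r B ℓ)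

/-- Time-and-level-indexed support sets with feedback strength `f`:
`S(0,t) = B`; `S(ℓ,0) = ∅` for `ℓ ≥ 1`; and
`S(ℓ,t) = S(ℓ,t-1) ∪ {c at level ℓ : |children(c) ∩ S(ℓ-1,t-1)| + f·|parents(c) ∩ S(ℓ+1,t-1)| ≥ r·k}`. -/
def suppFB (H : ConceptHierarchy α) (r f : ℝ) (B : Finset α) : ℕ → ℕ → Finset α
  | 0, _ => B
  | (_+1), 0 => ∅
  | (ℓ+1), (t+1) => suppFB H r f B (ℓ+1) t ∪
      H.concepts.filter (fun c => H.level c = ℓ + 1 ∧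
        r * H.k ≤ ((H.children c ∩ suppFB H r f B ℓ t).card : ℝ) +
          f * ((H.parents c ∩ suppFB H r f B (ℓ+2) t).card : ℝ))
  termination_by ℓ t => t

/-- `supp_{r,f}(B,*,t) = ⋃_ℓ S(ℓ,t)`. -/
def suppFBatTime (H : ConceptHierarchy α) (r f : ℝ) (B : Finset α) (t : ℕ) : Set α :=
  ⋃ ℓ, ↑(H.suppFB r f B ℓ t)

/-- `supp_{r,f}(B) = ⋃_{ℓ,t} S(ℓ,t)`. -/
def suppFBSet (H : ConceptHierarchy α) (r f : ℝ) (B : Finset α) : Set α :=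
  ⋃ t, H.suppFBatTime r f B t

end ConceptHierarchy

/-- Feed-forward 0/1 weights: weight 1 from the rep of a child to the rep of its
parent, weight 0 otherwise. -/
def ffWeight {α ν : Type} [DecidableEq α] (H : ConceptHierarchy α) (rep : α → ν)
    (u v : ν) : ℝ :=
  if ∃ c ∈ H.concepts, ∃ c' ∈ H.children c, u = rep c' ∧ v = rep c then 1 else 0

/-- Feedback-network weights: weight 1 upward (rep of child to rep of parent),
weight `f` downward (rep of parent to rep of child), 0 otherwise. -/
def fbWeight {α ν : Type} [DecidableEq α] (H : ConceptHierarchy α) (rep : α → ν)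
    (f : ℝ) (u v : ν) : ℝ :=
  if ∃ c ∈ H.concepts, ∃ c' ∈ H.children c, u = rep c' ∧ v = rep c then 1
  else if ∃ c ∈ H.concepts, ∃ c' ∈ H.children c, u = rep c ∧ v = rep c' then f
  else 0

/-- the 0/1-weight feed-forward network with threshold
`τ ∈ [r₁k, r₂k]` `(r₁,r₂)`-recognizes the concept hierarchy. -/
theorem ff_recognizes {α ν : Type} [DecidableEq α] [DecidableEq ν] [Fintype ν]
    (H : ConceptHierarchy α) (rep : α → ν) (layer : ν → ℕ)
    (hrep_inj : ∀ c ∈ H.concepts, ∀ c' ∈ H.concepts, rep c = rep c' → c = c')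
    (hrep_layer : ∀ c ∈ H.concepts, layer (rep c) = H.level c)
    (r₁ r₂ τ : ℝ) (hr0 : 0 ≤ r₁) (hr12 : r₁ ≤ r₂) (hr1 : r₂ ≤ 1) (hr2pos : 0 < r₂)
    (hτ1 : r₁ * H.k ≤ τ) (hτ2 : τ ≤ r₂ * H.k)
    (firing : ν → ℕ → Prop) (B : Finset α)
    (hB : ∀ b ∈ B, b ∈ H.concepts ∧ H.level b = 0) (t : ℕ)
    (hpres : ∀ u : ν, layer u = 0 → (firing u t ↔ ∃ b ∈ B, u = rep b))
    (hdyn : ∀ u : ν, 1 ≤ layer u → ∀ s : ℕ, (firing u (s + 1) ↔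
        τ ≤ ∑ v ∈ Finset.univ.filter (fun v => layer v + 1 = layer u ∧ firing v s),
          ffWeight H rep v u)) :
    (∀ c ∈ H.concepts, c ∈ H.supp r₂ B → firing (rep c) (t + H.level c)) ∧
    (∀ c ∈ H.concepts, c ∉ H.supp r₁ B → ¬ firing (rep c) (t + H.level c)) := by
  -- Auxiliary facts
  have hsuppL_mem : ∀ (r : ℝ) (ℓ : ℕ) (c : α), c ∈ H.suppL r B ℓ →
      c ∈ H.concepts ∧ H.level c = ℓ := by
    intro r ℓ c hc
    cases ℓ with
    | zero =>
      simp only [ConceptHierarchy.suppL, Finset.mem_inter, Finset.mem_filter] at hc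
      exact ⟨hc.2.1, hc.2.2⟩
    | succ ℓ =>
      simp only [ConceptHierarchy.suppL, Finset.mem_filter] at hc
      exact ⟨hc.1, hc.2.1⟩
  -- weight lemma
  have hw : ∀ c ∈ H.concepts, ∀ v : ν,
      ffWeight H rep v (rep c) = if ∃ c' ∈ H.children c, v = rep c' then (1:ℝ) else 0 := by
    intro c hc v
    unfold ffWeight
    congr 1
    simp only [eq_iff_iff]
    constructor
    · rintro ⟨d, hd, c', hc', rfl, hdc⟩
      have : d = c := hrep_inj d hd c hc hdc.symm
      subst this
      exact ⟨c', hc', rfl⟩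
    · rintro ⟨c', hc', rfl⟩
      exact ⟨c, hc, c', hc', rfl, rfl⟩
  -- main induction
  have key : ∀ ℓ : ℕ, ∀ c ∈ H.concepts, H.level c = ℓ →
      ((c ∈ H.suppL r₂ B ℓ → firing (rep c) (t + ℓ)) ∧
       (firing (rep c) (t + ℓ) → c ∈ H.suppL r₁ B ℓ)) := by
    intro ℓ
    induction ℓ with
    | zero =>
      intro c hc hlev
      have hlay : layer (rep c) = 0 := by rw [hrep_layer c hc, hlev]
      constructor
      · intro hcs
        simp only [ConceptHierarchy.suppL, Finset.mem_inter] at hcs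
        exact (hpres (rep c) hlay).mpr ⟨c, hcs.1, rfl⟩
      · intro hf
        obtain ⟨b, hb, hrb⟩ := (hpres (rep c) hlay).mp hf
        have hbc : c = b := hrep_inj c hc b (hB b hb).1 hrb
        subst hbc
        simp only [ConceptHierarchy.suppL, Finset.mem_inter, Finset.mem_filter]
        exact ⟨hb, hc, hlev⟩
    | succ ℓ ih =>
      intro c hc hlev
      have hlay : layer (rep c) = ℓ + 1 := by rw [hrep_layer c hc, hlev]
      have hch : ∀ c' ∈ H.children c, c' ∈ H.concepts ∧ H.level c' = ℓ := by
        intro c' hc'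
        refine ⟨H.children_mem c hc c' hc', ?_⟩
        have := H.children_level c hc c' hc'
        omega
      -- the sum equals the number of firing children
      set F : Finset α := (H.children c).filter (fun c' => firing (rep c') (t + ℓ)) with hF
      have hsum : (∑ v ∈ Finset.univ.filter
            (fun v => layer v + 1 = layer (rep c) ∧ firing v (t + ℓ)),
            ffWeight H rep v (rep c)) = (F.card : ℝ) := by
        have h1 : (∑ v ∈ Finset.univ.filter
              (fun v => layer v + 1 = layer (rep c) ∧ firing v (t + ℓ)),
              ffWeight H rep v (rep c))
            = ∑ v ∈ Finset.univ.filter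
              (fun v => layer v + 1 = layer (rep c) ∧ firing v (t + ℓ)),
              (if ∃ c' ∈ H.children c, v = rep c' then (1:ℝ) else 0) :=
          Finset.sum_congr rfl (fun v _ => hw c hc v)
        rw [h1, Finset.sum_boole]
        congr 1
        have himg : (Finset.univ.filter
              (fun v => layer v + 1 = layer (rep c) ∧ firing v (t + ℓ))).filter
              (fun v => ∃ c' ∈ H.children c, v = rep c') = F.image rep := by
          ext v
          simp only [Finset.mem_filter, Finset.mem_univ, true_and, Finset.mem_image, hF]
          constructor
          · rintro ⟨⟨hl, hfv⟩, c', hc', rfl⟩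
            exact ⟨c', ⟨hc', hfv⟩, rfl⟩
          · rintro ⟨c', ⟨hc', hfv⟩, rfl⟩
            have hl' : layer (rep c') = ℓ := by
              rw [hrep_layer c' (hch c' hc').1, (hch c' hc').2]
            exact ⟨⟨by rw [hl', hlay], hfv⟩, c', hc', rfl⟩
        rw [himg, Finset.card_image_of_injOn]
        intro x hx y hy hxy
        simp only [hF, Finset.mem_coe, Finset.mem_filter] at hx hy
        exact hrep_inj x (hch x hx.1).1 y (hch y hy.1).1 hxy
      have hdyn' : firing (rep c) (t + (ℓ + 1)) ↔ τ ≤ (F.card : ℝ) := by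
        have := hdyn (rep c) (by omega) (t + ℓ)
        rw [hsum] at this
        have ht : t + (ℓ + 1) = (t + ℓ) + 1 := by omega
        rw [ht]
        exact this
      constructor
      · intro hcs
        simp only [ConceptHierarchy.suppL, Finset.mem_filter] at hcs
        obtain ⟨-, -, hcard⟩ := hcs
        have hsub : H.children c ∩ H.suppL r₂ B ℓ ⊆ F := by
          intro c' hc'
          rw [Finset.mem_inter] at hc'
          simp only [hF, Finset.mem_filter]
          exact ⟨hc'.1, ((ih c' (hch c' hc'.1).1 (hch c' hc'.1).2).1 hc'.2)⟩
        have : ((H.children c ∩ H.suppL r₂ B ℓ).card : ℝ) ≤ (F.card : ℝ) := by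
          exact_mod_cast Finset.card_le_card hsub
        exact hdyn'.mpr (le_trans hτ2 (le_trans hcard this))
      · intro hf
        have hcard := hdyn'.mp hf
        have hsub : F ⊆ H.children c ∩ H.suppL r₁ B ℓ := by
          intro c' hc'
          simp only [hF, Finset.mem_filter] at hc'
          rw [Finset.mem_inter]
          exact ⟨hc'.1, (ih c' (hch c' hc'.1).1 (hch c' hc'.1).2).2 hc'.2⟩
        have h2 : (F.card : ℝ) ≤ ((H.children c ∩ H.suppL r₁ B ℓ).card : ℝ) := by
          exact_mod_cast Finset.card_le_card hsub
        simp only [ConceptHierarchy.suppL, Finset.mem_filter]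
        exact ⟨hc, hlev, le_trans hτ1 (le_trans hcard h2)⟩
  constructor
  · intro c hc hcsupp
    obtain ⟨s, ⟨ℓ, rfl⟩, hmem⟩ := hcsupp
    simp only [Finset.mem_coe] at hmem
    have hlev := (hsuppL_mem r₂ ℓ c hmem).2
    subst hlev
    exact (key _ c hc rfl).1 hmem
  · intro c hc hcsupp hf
    apply hcsupp
    refine Set.mem_iUnion.mpr ⟨H.level c, ?_⟩
    simpa using (key (H.level c) c hc rfl).2 hf
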